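/- Let (Z_t)_{t=1}^{T} be a sequence of random variables adapted to a filtration (𝔉_t) with 0 ≤ Z_t ≤ B almost surely for all t. Then for every δ ∈ (0,1), with probability at least 1 − δ, both Σ_{t=1}^{T} Z_t ≤ (3/2)·Σ_{t=1}^{T} E[Z_t | 𝔉_{t−1}] + 4B·log(2/δ) and Σ_{t=1}^{T} E[Z_t | 𝔉_{t−1}] ≤ 2·Σ_{t=1}^{T} Z_t + 8B·log(2/δ) hold. -/

import Mathlib

open MeasureTheory Finset



lemma chord_exp {B θ x : ℝ} (hB : 0 < B) (hx : x ∈ Set.Icc 0 B) :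
    Real.exp (θ * x) ≤ 1 + ((Real.exp (θ * B) - 1) / B) * x := by
  obtain ⟨hx0, hxB⟩ := hx
  have ht0 : 0 ≤ x / B := div_nonneg hx0 hB.le
  have ht1 : x / B ≤ 1 := (div_le_one hB).2 hxB
  have h := convexOn_exp.2 (Set.mem_univ (0 : ℝ)) (Set.mem_univ (θ * B))
    (by linarith : (0:ℝ) ≤ 1 - x / B) ht0 (by ring)
  simp only [smul_eq_mul, mul_zero, zero_add, Real.exp_zero] at h
  have hxB' : x / B * (θ * B) = θ * x := by field_simp
  rw [hxB'] at h
  have : 1 + (Real.exp (θ * B) - 1) / B * x = (1 - x / B) * 1 + x / B * Real.exp (θ * B) := by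
    field_simp; ring
  linarith [h, this.le]

lemma abs_sum_le_card_mul {s : Finset ℕ} {f : ℕ → ℝ} {B : ℝ}
    (h : ∀ i ∈ s, |f i| ≤ B) : |∑ i ∈ s, f i| ≤ s.card * B := by
  calc |∑ i ∈ s, f i| ≤ ∑ i ∈ s, |f i| := Finset.abs_sum_le_sum_abs _ _
    _ ≤ ∑ _i ∈ s, B := Finset.sum_le_sum h
    _ = s.card * B := by rw [Finset.sum_const, nsmul_eq_mul]

lemma integrable_of_bound {Ω : Type*} {m0 : MeasurableSpace Ω} {μ : Measure Ω}
    [IsFiniteMeasure μ] {f : Ω → ℝ} (hf : AEStronglyMeasurable f μ) (K : ℝ)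
    (h : ∀ᵐ ω ∂μ, |f ω| ≤ K) : Integrable f μ :=
  Integrable.mono' (integrable_const K) hf (by simpa [Real.norm_eq_abs] using h)

lemma lin_bound {θ c B nB K a b d e : ℝ} (hK : K = (|θ| + |c| + |c| + |θ|) * (nB + B))
    (hnB : 0 ≤ nB) (hB : 0 ≤ B)
    (ha : |a| ≤ nB) (hb : |b| ≤ nB) (hd : |d| ≤ B) (he : |e| ≤ B) :
    θ * a - c * b - c * d + θ * e ≤ K := by
  have h1 : θ * a ≤ |θ| * nB :=
    (le_abs_self _).trans (by rw [abs_mul]; exact mul_le_mul_of_nonneg_left ha (abs_nonneg θ))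
  have h2 : -(c * b) ≤ |c| * nB :=
    (neg_le_abs _).trans (by rw [abs_mul]; exact mul_le_mul_of_nonneg_left hb (abs_nonneg c))
  have h3 : -(c * d) ≤ |c| * B :=
    (neg_le_abs _).trans (by rw [abs_mul]; exact mul_le_mul_of_nonneg_left hd (abs_nonneg c))
  have h4 : θ * e ≤ |θ| * B :=
    (le_abs_self _).trans (by rw [abs_mul]; exact mul_le_mul_of_nonneg_left he (abs_nonneg θ))
  nlinarith [abs_nonneg θ, abs_nonneg c]

lemma super_exp {Ω : Type*} {m0 : MeasurableSpace Ω}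
    (μ : Measure Ω) [IsProbabilityMeasure μ]
    (ℱ : Filtration ℕ m0) (B : ℝ) (hB : 0 < B)
    (Z : ℕ → Ω → ℝ) (hadapt : ∀ t, Measurable[ℱ t] (Z t))
    (hbdd : ∀ t, ∀ᵐ ω ∂μ, Z t ω ∈ Set.Icc 0 B) (θ : ℝ) (n : ℕ) :
    ∫ ω, Real.exp (θ * ∑ t ∈ Finset.Icc 1 n, Z t ω
      - ((Real.exp (θ * B) - 1) / B) * ∑ t ∈ Finset.Icc 1 n, (μ[Z t | ℱ (t - 1)]) ω) ∂μ ≤ 1 := by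
  set c : ℝ := (Real.exp (θ * B) - 1) / B with hc
  have hZm : ∀ t, Measurable (Z t) := fun t => (hadapt t).mono (ℱ.le t) le_rfl
  have hZabs : ∀ t, ∀ᵐ ω ∂μ, |Z t ω| ≤ B := fun t => by
    filter_upwards [hbdd t] with ω h using abs_le.2 ⟨by linarith [h.1], h.2⟩
  have hZint : ∀ t, Integrable (Z t) μ := fun t =>
    integrable_of_bound (hZm t).aestronglyMeasurable B (hZabs t)
  have hGbdd : ∀ t, ∀ᵐ ω ∂μ, (μ[Z t | ℱ (t - 1)]) ω ∈ Set.Icc 0 B := by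
    intro t
    have h0 : 0 ≤ᵐ[μ] μ[Z t | ℱ (t - 1)] :=
      condExp_nonneg (by filter_upwards [hbdd t] with ω h using h.1)
    have hup : μ[Z t | ℱ (t - 1)] ≤ᵐ[μ] μ[(fun _ => B) | ℱ (t - 1)] :=
      condExp_mono (hZint t) (integrable_const B)
        (by filter_upwards [hbdd t] with ω h using h.2)
    rw [condExp_const (ℱ.le (t - 1))] at hup
    filter_upwards [h0, hup] with ω h1 h2 using ⟨h1, h2⟩
  have hmaster : ∀ᵐ ω ∂μ, ∀ t, Z t ω ∈ Set.Icc 0 B ∧ (μ[Z t | ℱ (t - 1)]) ω ∈ Set.Icc 0 B :=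
    ae_all_iff.2 fun t => (hbdd t).and (hGbdd t)
  induction n with
  | zero =>
    simp [show Finset.Icc 1 0 = (∅ : Finset ℕ) from Finset.Icc_eq_empty (by omega)]
  | succ n ih =>
    have h1n : (1 : ℕ) ≤ n + 1 := by omega
    set G : ℕ → Ω → ℝ := fun t => μ[Z t | ℱ (t - 1)] with hG
    set A : Ω → ℝ := fun ω =>
      Real.exp (θ * ∑ t ∈ Finset.Icc 1 n, Z t ω - c * ∑ t ∈ Finset.Icc 1 n, G t ω
        - c * G (n + 1) ω) with hA
    set E : Ω → ℝ := fun ω => Real.exp (θ * Z (n + 1) ω) with hE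
    -- measurability w.r.t. ℱ n
    have hSmF : Measurable[ℱ n] (fun ω => ∑ t ∈ Finset.Icc 1 n, Z t ω) :=
      Finset.measurable_sum _ fun t ht =>
        (hadapt t).mono (ℱ.mono (Finset.mem_Icc.1 ht).2) le_rfl
    have hGmF : ∀ t, t ≤ n + 1 → Measurable[ℱ n] (G t) := fun t ht =>
      (stronglyMeasurable_condExp.mono (ℱ.mono (by omega : t - 1 ≤ n))).measurable
    have hVmF : Measurable[ℱ n] (fun ω => ∑ t ∈ Finset.Icc 1 n, G t ω) :=
      Finset.measurable_sum _ fun t ht =>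
        hGmF t (by have := (Finset.mem_Icc.1 ht).2; omega)
    have hAmF : Measurable[ℱ n] A :=
      Real.measurable_exp.comp
        (((hSmF.const_mul θ).sub (hVmF.const_mul c)).sub ((hGmF (n+1) le_rfl).const_mul c))
    have hAm : Measurable A := hAmF.mono (ℱ.le n) le_rfl
    have hEm : Measurable E := Real.measurable_exp.comp ((hZm (n+1)).const_mul θ)
    -- uniform bounds
    set K : ℝ := (|θ| + |c| + |c| + |θ|) * ((n : ℝ) * B + B) with hK
    have hbnds : ∀ᵐ ω ∂μ, |∑ t ∈ Finset.Icc 1 n, Z t ω| ≤ (n : ℝ) * B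
        ∧ |∑ t ∈ Finset.Icc 1 n, G t ω| ≤ (n : ℝ) * B
        ∧ |G (n+1) ω| ≤ B ∧ |Z (n+1) ω| ≤ B := by
      filter_upwards [hmaster] with ω h
      have habs : ∀ t, |Z t ω| ≤ B ∧ |G t ω| ≤ B := fun t =>
        ⟨abs_le.2 ⟨by linarith [(h t).1.1], (h t).1.2⟩,
         abs_le.2 ⟨by linarith [(h t).2.1], (h t).2.2⟩⟩
      refine ⟨?_, ?_, (habs _).2, (habs _).1⟩
      · simpa [Nat.card_Icc] using
          abs_sum_le_card_mul (s := Finset.Icc 1 n) (f := fun t => Z t ω) (B := B)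
            (fun i _ => (habs i).1)
      · simpa [Nat.card_Icc] using
          abs_sum_le_card_mul (s := Finset.Icc 1 n) (f := fun t => G t ω) (B := B)
            (fun i _ => (habs i).2)
    have hnB : (0:ℝ) ≤ (n : ℝ) * B := mul_nonneg (Nat.cast_nonneg n) hB.le
    have habs0 : |(0:ℝ)| ≤ (n:ℝ) * B := by simpa using hnB
    have habs0B : |(0:ℝ)| ≤ B := by simpa using hB.le
    have hexpK : ∀ᵐ ω ∂μ, |A ω * E ω| ≤ Real.exp K ∧ |A ω| ≤ Real.exp K
        ∧ |E ω| ≤ Real.exp K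
        ∧ |Real.exp (θ * ∑ t ∈ Finset.Icc 1 n, Z t ω
            - c * ∑ t ∈ Finset.Icc 1 n, G t ω)| ≤ Real.exp K := by
      filter_upwards [hbnds] with ω ⟨h1, h2, h3, h4⟩
      refine ⟨?_, ?_, ?_, ?_⟩
      · rw [hA, hE, abs_of_nonneg (mul_nonneg (Real.exp_pos _).le (Real.exp_pos _).le),
          ← Real.exp_add]
        exact Real.exp_le_exp.2 (lin_bound hK hnB hB.le h1 h2 h3 h4)
      · rw [abs_of_nonneg (Real.exp_pos _).le]
        exact Real.exp_le_exp.2 (by simpa using lin_bound hK hnB hB.le h1 h2 h3 habs0B)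
      · rw [hE, abs_of_nonneg (Real.exp_pos _).le]
        exact Real.exp_le_exp.2 (by simpa using lin_bound hK hnB hB.le habs0 habs0 habs0B h4)
      · rw [abs_of_nonneg (Real.exp_pos _).le]
        exact Real.exp_le_exp.2 (by simpa using lin_bound hK hnB hB.le h1 h2 habs0B habs0B)
    -- integrability
    have hAEint : Integrable (A * E) μ :=
      integrable_of_bound ((hAm.mul hEm).aestronglyMeasurable) (Real.exp K)
        (by filter_upwards [hexpK] with ω h using h.1)
    have hEint : Integrable E μ :=
      integrable_of_bound hEm.aestronglyMeasurable (Real.exp K)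
        (by filter_upwards [hexpK] with ω h using h.2.2.1)
    have hIHint : Integrable (fun ω => Real.exp (θ * ∑ t ∈ Finset.Icc 1 n, Z t ω
        - c * ∑ t ∈ Finset.Icc 1 n, G t ω)) μ :=
      integrable_of_bound
        (Real.measurable_exp.comp (((hSmF.const_mul θ).sub (hVmF.const_mul c)).mono
          (ℱ.le n) le_rfl)).aestronglyMeasurable (Real.exp K)
        (by filter_upwards [hexpK] with ω h using h.2.2.2)
    -- pull-out property
    have hpull : μ[A * E | ℱ n] =ᵐ[μ] A * μ[E | ℱ n] :=
      condExp_mul_of_stronglyMeasurable_left hAmF.stronglyMeasurable hAEint hEint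
    -- conditional chord bound
    have hlinint : Integrable (fun ω => 1 + c * Z (n+1) ω) μ :=
      (integrable_const (1:ℝ)).add ((hZint (n+1)).const_mul c)
    have hchord : E ≤ᵐ[μ] fun ω => 1 + c * Z (n+1) ω := by
      filter_upwards [hbdd (n+1)] with ω h using chord_exp hB h
    have hmono : μ[E | ℱ n] ≤ᵐ[μ] μ[(fun ω => 1 + c * Z (n+1) ω) | ℱ n] :=
      condExp_mono hEint hlinint hchord
    have hlineq : μ[(fun ω => 1 + c * Z (n+1) ω) | ℱ n] =ᵐ[μ] fun ω => 1 + c * G (n+1) ω := by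
      have hfun : (fun ω => 1 + c * Z (n+1) ω) = (fun _ => (1:ℝ)) + c • Z (n+1) := by
        funext ω; simp [smul_eq_mul]
      rw [hfun]
      have hadd := condExp_add (μ := μ) (m := ℱ n) (integrable_const (1:ℝ))
        ((hZint (n+1)).smul c)
      refine hadd.trans ?_
      have hsmul := condExp_smul (μ := μ) (m := ℱ n) c (Z (n+1))
      filter_upwards [hsmul] with ω hω
      simp only [Pi.add_apply, Pi.smul_apply, smul_eq_mul, condExp_const (ℱ.le n)] at *
      rw [hω]
      rfl
    have hcond_le : μ[E | ℱ n] ≤ᵐ[μ] fun ω => 1 + c * G (n+1) ω := hmono.trans hlineq.le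
    -- key a.e. inequality
    have hkey : μ[A * E | ℱ n] ≤ᵐ[μ] fun ω =>
        Real.exp (θ * ∑ t ∈ Finset.Icc 1 n, Z t ω - c * ∑ t ∈ Finset.Icc 1 n, G t ω) := by
      filter_upwards [hpull, hcond_le] with ω h1 h2
      have hA0 : 0 ≤ A ω := (Real.exp_pos _).le
      calc (μ[A * E | ℱ n]) ω = A ω * (μ[E | ℱ n]) ω := h1
        _ ≤ A ω * (1 + c * G (n+1) ω) := mul_le_mul_of_nonneg_left h2 hA0
        _ ≤ A ω * Real.exp (c * G (n+1) ω) := by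
            have := Real.add_one_le_exp (c * G (n+1) ω)
            exact mul_le_mul_of_nonneg_left (by linarith) hA0
        _ = Real.exp (θ * ∑ t ∈ Finset.Icc 1 n, Z t ω
              - c * ∑ t ∈ Finset.Icc 1 n, G t ω) := by
            rw [hA, ← Real.exp_add]; congr 1; ring
    -- assemble
    have hrw : (fun ω => Real.exp (θ * ∑ t ∈ Finset.Icc 1 (n+1), Z t ω
        - c * ∑ t ∈ Finset.Icc 1 (n+1), G t ω)) = A * E := by
      funext ω
      rw [Finset.sum_Icc_succ_top h1n (fun t => Z t ω),
        Finset.sum_Icc_succ_top h1n (fun t => G t ω)]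
      simp only [Pi.mul_apply, hA, hE, ← Real.exp_add]
      congr 1; ring
    calc ∫ ω, Real.exp (θ * ∑ t ∈ Finset.Icc 1 (n+1), Z t ω
          - c * ∑ t ∈ Finset.Icc 1 (n+1), G t ω) ∂μ
        = ∫ ω, (A * E) ω ∂μ := by rw [hrw]
      _ = ∫ ω, (μ[A * E | ℱ n]) ω ∂μ := (integral_condExp (ℱ.le n) (f := A * E)).symm
      _ ≤ ∫ ω, Real.exp (θ * ∑ t ∈ Finset.Icc 1 n, Z t ω
            - c * ∑ t ∈ Finset.Icc 1 n, G t ω) ∂μ :=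
          integral_mono_ae integrable_condExp hIHint hkey
      _ ≤ 1 := ih



lemma exp_quarter_lt : Real.exp (1/4) < 11/8 := by
  have h4 : Real.exp (1/4) ^ 4 = Real.exp 1 := by
    rw [← Real.exp_nat_mul]; norm_num
  have h1 : Real.exp 1 < 2.7182818286 := Real.exp_one_lt_d9
  have h2 : Real.exp (1/4) ^ 4 < (11/8:ℝ) ^ 4 := by rw [h4]; nlinarith
  exact lt_of_pow_lt_pow_left₀ 4 (by norm_num) h2

lemma exp_neg_quarter_le : Real.exp (-(1/4)) ≤ 7/8 := by
  have h : (8/7:ℝ) ≤ Real.exp (1/4) := by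
    have := Real.add_one_le_exp (1/4:ℝ); linarith
  rw [Real.exp_neg]
  have h0 : (0:ℝ) < 8/7 := by norm_num
  calc (Real.exp (1/4))⁻¹ ≤ ((8:ℝ)/7)⁻¹ := inv_anti₀ h0 h
    _ = 7/8 := by norm_num

lemma markov_exp {Ω : Type*} {m0 : MeasurableSpace Ω} (μ : Measure Ω)
    [IsProbabilityMeasure μ] {W : Ω → ℝ}
    (hint : Integrable (fun ω => Real.exp (W ω)) μ)
    (hle : ∫ ω, Real.exp (W ω) ∂μ ≤ 1) {a : ℝ} (ha : 1 ≤ a) :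
    μ {ω | Real.log a ≤ W ω} ≤ ENNReal.ofReal a⁻¹ := by
  have ha0 : 0 < a := by linarith
  have h := mul_meas_ge_le_integral_of_nonneg
    (ae_of_all μ fun ω => (Real.exp_pos (W ω)).le) hint a
  have hsub : {ω | Real.log a ≤ W ω} ⊆ {ω | a ≤ Real.exp (W ω)} := by
    intro ω hω
    have : Real.exp (Real.log a) ≤ Real.exp (W ω) := Real.exp_le_exp.2 hω
    rwa [Real.exp_log ha0] at this
  have hmono : (μ {ω | Real.log a ≤ W ω}).toReal ≤ (μ {ω | a ≤ Real.exp (W ω)}).toReal :=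
    ENNReal.toReal_mono (measure_ne_top μ _) (measure_mono hsub)
  have hfin : (μ {ω | a ≤ Real.exp (W ω)}).toReal ≤ a⁻¹ := by
    simp only [Measure.real] at h
    nlinarith [mul_inv_cancel₀ ha0.ne', h, hle, ENNReal.toReal_nonneg
      (a := μ {ω | a ≤ Real.exp (W ω)})]
  exact (ENNReal.le_ofReal_iff_toReal_le (measure_ne_top μ _) (by positivity)).2
    (hmono.trans hfin)

lemma arith1 {B L S V cB : ℝ} (hB : 0 < B) (hV : 0 ≤ V) (hcB : cB ≤ 3/8)
    (h : 3/2*V + 4*B*L < S) : L ≤ 1/(4*B)*S - cB/B*V := by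
  have e1 : 1/(4*B)*(3/2*V + 4*B*L) = 3/(8*B)*V + L := by field_simp; ring
  have e2 : 1/(4*B)*(3/2*V+4*B*L) ≤ 1/(4*B)*S :=
    mul_le_mul_of_nonneg_left h.le (by positivity)
  have e3 : cB/B*V ≤ 3/(8*B)*V := by
    apply mul_le_mul_of_nonneg_right _ hV
    rw [show (3:ℝ)/(8*B) = (3/8)/B by ring]
    exact div_le_div_of_nonneg_right hcB hB.le
  linarith

lemma arith2 {B L S V dB : ℝ} (hB : 0 < B) (hS : 0 ≤ S) (hL : 0 ≤ L) (hdB : 1/8 ≤ dB)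
    (h : 2*S + 8*B*L < V) : L ≤ -(1/(4*B))*S - (-dB)/B*V := by
  have hV0 : 0 ≤ V := by nlinarith [mul_nonneg hB.le hL]
  have e1 : 1/(8*B)*(2*S+8*B*L) = 1/(4*B)*S + L := by field_simp; ring
  have e2 : 1/(8*B)*(2*S+8*B*L) ≤ 1/(8*B)*V :=
    mul_le_mul_of_nonneg_left h.le (by positivity)
  have e3 : 1/(8*B)*V ≤ dB/B*V := by
    apply mul_le_mul_of_nonneg_right _ hV0
    rw [show (1:ℝ)/(8*B) = (1/8)/B by ring]
    exact div_le_div_of_nonneg_right hdB hB.le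
  have : -dB/B*V = -(dB/B*V) := by ring
  linarith [this]




lemma abs_sum_le_card_mul' {s : Finset ℕ} {f : ℕ → ℝ} {B : ℝ}
    (h : ∀ i ∈ s, |f i| ≤ B) : |∑ i ∈ s, f i| ≤ s.card * B := by
  calc |∑ i ∈ s, f i| ≤ ∑ i ∈ s, |f i| := Finset.abs_sum_le_sum_abs _ _
    _ ≤ ∑ _i ∈ s, B := Finset.sum_le_sum h
    _ = s.card * B := by rw [Finset.sum_const, nsmul_eq_mul]

lemma integrable_of_bound' {Ω : Type*} {m0 : MeasurableSpace Ω} {μ : Measure Ω}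
    [IsFiniteMeasure μ] {f : Ω → ℝ} (hf : AEStronglyMeasurable f μ) (K : ℝ)
    (h : ∀ᵐ ω ∂μ, |f ω| ≤ K) : Integrable f μ :=
  Integrable.mono' (integrable_const K) hf (by simpa [Real.norm_eq_abs] using h)

lemma condexp_bdd' {Ω : Type*} {m0 : MeasurableSpace Ω}
    (μ : Measure Ω) [IsProbabilityMeasure μ]
    (ℱ : Filtration ℕ m0) (B : ℝ) (hB : 0 < B)
    (Z : ℕ → Ω → ℝ) (hadapt : ∀ t, Measurable[ℱ t] (Z t))
    (hbdd : ∀ t, ∀ᵐ ω ∂μ, Z t ω ∈ Set.Icc 0 B) (t : ℕ) :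
    ∀ᵐ ω ∂μ, (μ[Z t | ℱ (t - 1)]) ω ∈ Set.Icc 0 B := by
  have hZm : Measurable (Z t) := (hadapt t).mono (ℱ.le t) le_rfl
  have hZint : Integrable (Z t) μ := integrable_of_bound' hZm.aestronglyMeasurable B
    (by filter_upwards [hbdd t] with ω h using abs_le.2 ⟨by linarith [h.1], h.2⟩)
  have h0 : 0 ≤ᵐ[μ] μ[Z t | ℱ (t - 1)] :=
    condExp_nonneg (by filter_upwards [hbdd t] with ω h using h.1)
  have hup : μ[Z t | ℱ (t - 1)] ≤ᵐ[μ] μ[(fun _ => B) | ℱ (t - 1)] :=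
    condExp_mono hZint (integrable_const B)
      (by filter_upwards [hbdd t] with ω h using h.2)
  rw [condExp_const (ℱ.le (t - 1))] at hup
  filter_upwards [h0, hup] with ω h1 h2 using ⟨h1, h2⟩

lemma lin_bound' {θ c B nB K a b d e : ℝ} (hK : K = (|θ| + |c| + |c| + |θ|) * (nB + B))
    (hnB : 0 ≤ nB) (hB : 0 ≤ B)
    (ha : |a| ≤ nB) (hb : |b| ≤ nB) (hd : |d| ≤ B) (he : |e| ≤ B) :
    θ * a - c * b - c * d + θ * e ≤ K := by
  have h1 : θ * a ≤ |θ| * nB :=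
    (le_abs_self _).trans (by rw [abs_mul]; exact mul_le_mul_of_nonneg_left ha (abs_nonneg θ))
  have h2 : -(c * b) ≤ |c| * nB :=
    (neg_le_abs _).trans (by rw [abs_mul]; exact mul_le_mul_of_nonneg_left hb (abs_nonneg c))
  have h3 : -(c * d) ≤ |c| * B :=
    (neg_le_abs _).trans (by rw [abs_mul]; exact mul_le_mul_of_nonneg_left hd (abs_nonneg c))
  have h4 : θ * e ≤ |θ| * B :=
    (le_abs_self _).trans (by rw [abs_mul]; exact mul_le_mul_of_nonneg_left he (abs_nonneg θ))
  nlinarith [abs_nonneg θ, abs_nonneg c]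

lemma exp_W_integrable' {Ω : Type*} {m0 : MeasurableSpace Ω}
    (μ : Measure Ω) [IsProbabilityMeasure μ]
    (ℱ : Filtration ℕ m0) (B : ℝ) (hB : 0 < B)
    (Z : ℕ → Ω → ℝ) (hadapt : ∀ t, Measurable[ℱ t] (Z t))
    (hbdd : ∀ t, ∀ᵐ ω ∂μ, Z t ω ∈ Set.Icc 0 B) (θ : ℝ) (n : ℕ) :
    Integrable (fun ω => Real.exp (θ * ∑ t ∈ Finset.Icc 1 n, Z t ω
      - ((Real.exp (θ * B) - 1) / B) * ∑ t ∈ Finset.Icc 1 n, (μ[Z t | ℱ (t - 1)]) ω)) μ := by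
  set c : ℝ := (Real.exp (θ * B) - 1) / B with hc
  have hZm : ∀ t, Measurable (Z t) := fun t => (hadapt t).mono (ℱ.le t) le_rfl
  have hSm : Measurable (fun ω => ∑ t ∈ Finset.Icc 1 n, Z t ω) :=
    Finset.measurable_sum _ fun t _ => hZm t
  have hVm : Measurable (fun ω => ∑ t ∈ Finset.Icc 1 n, (μ[Z t | ℱ (t - 1)]) ω) :=
    Finset.measurable_sum _ fun t _ =>
      (stronglyMeasurable_condExp.mono (ℱ.le (t - 1))).measurable
  have hm : Measurable (fun ω => Real.exp (θ * ∑ t ∈ Finset.Icc 1 n, Z t ω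
      - c * ∑ t ∈ Finset.Icc 1 n, (μ[Z t | ℱ (t - 1)]) ω)) :=
    Real.measurable_exp.comp ((hSm.const_mul θ).sub (hVm.const_mul c))
  have hnB : (0:ℝ) ≤ (n : ℝ) * B := mul_nonneg (Nat.cast_nonneg n) hB.le
  apply integrable_of_bound' hm.aestronglyMeasurable
    (Real.exp ((|θ| + |c| + |c| + |θ|) * ((n : ℝ) * B + B)))
  have hmaster : ∀ᵐ ω ∂μ, ∀ t, Z t ω ∈ Set.Icc 0 B ∧ (μ[Z t | ℱ (t - 1)]) ω ∈ Set.Icc 0 B :=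
    ae_all_iff.2 fun t => (hbdd t).and (condexp_bdd' μ ℱ B hB Z hadapt hbdd t)
  filter_upwards [hmaster] with ω h
  have habs : ∀ t, |Z t ω| ≤ B ∧ |(μ[Z t | ℱ (t - 1)]) ω| ≤ B := fun t =>
    ⟨abs_le.2 ⟨by linarith [(h t).1.1], (h t).1.2⟩,
     abs_le.2 ⟨by linarith [(h t).2.1], (h t).2.2⟩⟩
  have hS : |∑ t ∈ Finset.Icc 1 n, Z t ω| ≤ (n:ℝ) * B := by
    simpa [Nat.card_Icc] using
      abs_sum_le_card_mul' (s := Finset.Icc 1 n) (f := fun t => Z t ω) (B := B)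
        (fun i _ => (habs i).1)
  have hV : |∑ t ∈ Finset.Icc 1 n, (μ[Z t | ℱ (t - 1)]) ω| ≤ (n:ℝ) * B := by
    simpa [Nat.card_Icc] using
      abs_sum_le_card_mul' (s := Finset.Icc 1 n)
        (f := fun t => (μ[Z t | ℱ (t - 1)]) ω) (B := B) (fun i _ => (habs i).2)
  rw [abs_of_nonneg (Real.exp_pos _).le]
  apply Real.exp_le_exp.2
  have h0B : |(0:ℝ)| ≤ B := by simpa using hB.le
  have := lin_bound' (θ := θ) (c := c) rfl hnB hB.le hS hV h0B h0B
  simpa using this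


theorem stmt_8 {Ω : Type*} {m0 : MeasurableSpace Ω}
    (μ : Measure Ω) [IsProbabilityMeasure μ]
    (ℱ : Filtration ℕ m0) (T : ℕ) (B : ℝ) (hB : 0 < B)
    (Z : ℕ → Ω → ℝ) (hadapt : ∀ t, Measurable[ℱ t] (Z t))
    (hbdd : ∀ t, ∀ᵐ ω ∂μ, Z t ω ∈ Set.Icc 0 B)
    (δ : ℝ) (hδ : δ ∈ Set.Ioo (0 : ℝ) 1) :
    ENNReal.ofReal (1 - δ) ≤
      μ {ω | (∑ t ∈ Finset.Icc 1 T, Z t ω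
              ≤ (3 / 2) * (∑ t ∈ Finset.Icc 1 T, (μ[Z t | ℱ (t - 1)]) ω)
                + 4 * B * Real.log (2 / δ))
           ∧ ((∑ t ∈ Finset.Icc 1 T, (μ[Z t | ℱ (t - 1)]) ω)
              ≤ 2 * (∑ t ∈ Finset.Icc 1 T, Z t ω) + 8 * B * Real.log (2 / δ))} := by
  obtain ⟨hδ0, hδ1⟩ := hδ
  have hL0 : 0 < Real.log (2 / δ) := Real.log_pos (by rw [lt_div_iff₀ hδ0]; nlinarith)
  have h2δ : (1:ℝ) ≤ 2 / δ := by rw [le_div_iff₀ hδ0]; nlinarith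
  have hinv : (2 / δ)⁻¹ = δ / 2 := by rw [inv_div]
  -- Markov bounds for the two tilts
  have hm : ∀ θ : ℝ, μ {ω | Real.log (2 / δ) ≤ θ * ∑ t ∈ Finset.Icc 1 T, Z t ω
      - ((Real.exp (θ * B) - 1) / B) * ∑ t ∈ Finset.Icc 1 T, (μ[Z t | ℱ (t - 1)]) ω}
      ≤ ENNReal.ofReal (δ / 2) := by
    intro θ
    have h := markov_exp μ (exp_W_integrable' μ ℱ B hB Z hadapt hbdd θ T)
      (super_exp μ ℱ B hB Z hadapt hbdd θ T) h2δ
    rwa [hinv] at h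
  have hθ₁B : 1 / (4 * B) * B = (1:ℝ)/4 := by field_simp
  have hθ₂B : -(1 / (4 * B)) * B = -((1:ℝ)/4) := by field_simp
  -- a.e. nonnegativity of the sums
  have hV0 : ∀ᵐ ω ∂μ, 0 ≤ ∑ t ∈ Finset.Icc 1 T, (μ[Z t | ℱ (t - 1)]) ω := by
    have h := ae_all_iff.2 (condexp_bdd' μ ℱ B hB Z hadapt hbdd)
    filter_upwards [h] with ω hω using Finset.sum_nonneg fun t _ => (hω t).1
  have hS0 : ∀ᵐ ω ∂μ, 0 ≤ ∑ t ∈ Finset.Icc 1 T, Z t ω := by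
    filter_upwards [ae_all_iff.2 hbdd] with ω hω using
      Finset.sum_nonneg fun t _ => (hω t).1
  -- bad events
  have hb1 : μ {ω | ¬ (∑ t ∈ Finset.Icc 1 T, Z t ω
      ≤ (3 / 2) * (∑ t ∈ Finset.Icc 1 T, (μ[Z t | ℱ (t - 1)]) ω)
        + 4 * B * Real.log (2 / δ))} ≤ ENNReal.ofReal (δ / 2) := by
    refine le_trans (measure_mono_ae ?_) (hm (1 / (4 * B)))
    filter_upwards [hV0] with ω hV
    intro hbad
    have hbad' : ¬ (∑ t ∈ Finset.Icc 1 T, Z t ω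
        ≤ (3 / 2) * (∑ t ∈ Finset.Icc 1 T, (μ[Z t | ℱ (t - 1)]) ω)
          + 4 * B * Real.log (2 / δ)) := hbad
    rw [not_le] at hbad'
    have hcB : Real.exp (1 / (4 * B) * B) - 1 ≤ 3/8 := by
      rw [hθ₁B]; linarith [exp_quarter_lt]
    show Real.log (2 / δ) ≤ 1/(4*B) * (∑ t ∈ Finset.Icc 1 T, Z t ω)
        - (Real.exp (1 / (4 * B) * B) - 1)/B * ∑ t ∈ Finset.Icc 1 T, (μ[Z t | ℱ (t - 1)]) ω
    exact arith1 hB hV hcB hbad'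
  have hb2 : μ {ω | ¬ ((∑ t ∈ Finset.Icc 1 T, (μ[Z t | ℱ (t - 1)]) ω)
      ≤ 2 * (∑ t ∈ Finset.Icc 1 T, Z t ω) + 8 * B * Real.log (2 / δ))}
      ≤ ENNReal.ofReal (δ / 2) := by
    refine le_trans (measure_mono_ae ?_) (hm (-(1 / (4 * B))))
    filter_upwards [hS0] with ω hS
    intro hbad
    have hbad' : ¬ ((∑ t ∈ Finset.Icc 1 T, (μ[Z t | ℱ (t - 1)]) ω)
        ≤ 2 * (∑ t ∈ Finset.Icc 1 T, Z t ω) + 8 * B * Real.log (2 / δ)) := hbad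
    rw [not_le] at hbad'
    have hdB : (1:ℝ)/8 ≤ 1 - Real.exp (-(1 / (4 * B)) * B) := by
      rw [hθ₂B]; linarith [exp_neg_quarter_le]
    have h := arith2 (L := Real.log (2 / δ)) hB hS hL0.le hdB hbad'
    have heq : -(1 - Real.exp (-(1 / (4 * B)) * B)) / B
        = (Real.exp (-(1 / (4 * B)) * B) - 1) / B := by ring
    rw [heq] at h
    exact h
  -- union bound and conclusion
  set good := {ω | (∑ t ∈ Finset.Icc 1 T, Z t ω
      ≤ (3 / 2) * (∑ t ∈ Finset.Icc 1 T, (μ[Z t | ℱ (t - 1)]) ω)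
        + 4 * B * Real.log (2 / δ))
    ∧ ((∑ t ∈ Finset.Icc 1 T, (μ[Z t | ℱ (t - 1)]) ω)
        ≤ 2 * (∑ t ∈ Finset.Icc 1 T, Z t ω) + 8 * B * Real.log (2 / δ))} with hgood
  have hsplit : goodᶜ ⊆ {ω | ¬ (∑ t ∈ Finset.Icc 1 T, Z t ω
      ≤ (3 / 2) * (∑ t ∈ Finset.Icc 1 T, (μ[Z t | ℱ (t - 1)]) ω)
        + 4 * B * Real.log (2 / δ))}
    ∪ {ω | ¬ ((∑ t ∈ Finset.Icc 1 T, (μ[Z t | ℱ (t - 1)]) ω)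
        ≤ 2 * (∑ t ∈ Finset.Icc 1 T, Z t ω) + 8 * B * Real.log (2 / δ))} := by
    intro ω hω
    by_cases h1 : (∑ t ∈ Finset.Icc 1 T, Z t ω
      ≤ (3 / 2) * (∑ t ∈ Finset.Icc 1 T, (μ[Z t | ℱ (t - 1)]) ω)
        + 4 * B * Real.log (2 / δ))
    · right
      intro h2
      exact hω ⟨h1, h2⟩
    · left; exact h1
  have hcompl : μ goodᶜ ≤ ENNReal.ofReal δ := by
    have hsum : ENNReal.ofReal (δ/2) + ENNReal.ofReal (δ/2) = ENNReal.ofReal δ := by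
      rw [← ENNReal.ofReal_add (by positivity) (by positivity),
        show δ/2 + δ/2 = δ by ring]
    refine le_trans (measure_mono hsplit) (le_trans (measure_union_le _ _)
      (le_trans (add_le_add hb1 hb2) (le_of_eq hsum)))
  have h1 : (1:ENNReal) ≤ μ good + μ goodᶜ := by
    calc (1:ENNReal) = μ Set.univ := (measure_univ (μ := μ)).symm
      _ = μ (good ∪ goodᶜ) := by rw [Set.union_compl_self]
      _ ≤ μ good + μ goodᶜ := measure_union_le _ _
  calc ENNReal.ofReal (1 - δ) = 1 - ENNReal.ofReal δ := by
        rw [ENNReal.ofReal_sub 1 hδ0.le, ENNReal.ofReal_one]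
    _ ≤ μ good := by
        rw [tsub_le_iff_right]
        calc (1:ENNReal) ≤ μ good + μ goodᶜ := h1
          _ ≤ μ good + ENNReal.ofReal δ := add_le_add le_rfl hcompl
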